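/- Let (π(n,j))_{n∈ℕ, j∈{0,1}} be a probability distribution with π(0,0)=0 satisfying the steady-state master equation of the self-regulating gene. Then for every n ≥ 1: π(n,1)μn + π(n,0)μ(n−1) = π(n−1,1)λ + π(n−1,0)λ̃. -/
import Mathlib


/-- Flux balance across protein levels: any solution of the steady-state master equation
of the self-regulating gene satisfies
`π(n,1)μn + π(n,0)μ(n−1) = π(n−1,1)λ + π(n−1,0)λ̃` for all `n ≥ 1`. -/
theorem stmt7 (lam lamt μ θ ψ : ℝ) (hlam : 0 < lam) (hμ : 0 < μ) (hθ : 0 < θ)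
    (hψ : 0 < ψ) (hlamt : 0 ≤ lamt)
    (π1 π0 : ℤ → ℝ)
    (hneg : ∀ n : ℤ, n < 0 → π1 n = 0 ∧ π0 n = 0)
    (h00 : π0 0 = 0)
    (hmaster1 : ∀ n : ℤ, 0 ≤ n →
        π1 n * (n * (ψ + μ) + lam)
          = π1 (n - 1) * lam + π1 (n + 1) * (n + 1) * μ + π0 n * θ)
    (hmaster0 : ∀ n : ℤ, 0 ≤ n →
        π0 n * (((n : ℝ) - 1) * μ + θ + lamt)
          = π0 (n - 1) * lamt + π0 (n + 1) * n * μ + π1 n * ψ * n) :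
    ∀ n : ℤ, 1 ≤ n →
      π1 n * μ * n + π0 n * μ * ((n : ℝ) - 1)
        = π1 (n - 1) * lam + π0 (n - 1) * lamt := by
  have key : ∀ k : ℕ,
      π1 (k : ℤ) * μ * (k : ℝ) + π0 (k : ℤ) * μ * ((k : ℝ) - 1)
        = π1 ((k : ℤ) - 1) * lam + π0 ((k : ℤ) - 1) * lamt := by
    intro k
    induction k with
    | zero =>
      have h1 := (hneg (-1) (by norm_num)).1
      have h0 := (hneg (-1) (by norm_num)).2
      norm_num [h00, h1, h0]
    | succ k ih =>
      have m1 := hmaster1 (k : ℤ) (by positivity)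
      have m0 := hmaster0 (k : ℤ) (by positivity)
      push_cast at ih m1 m0 ⊢
      have e1 : ((k : ℤ) + 1 - 1) = (k : ℤ) := by ring
      rw [e1]
      linear_combination ih - m1 - m0
  intro n hn
  lift n to ℕ using (by linarith)
  exact key n
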